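/- Let γ have zero mean and unit variance, and let g be the double-sided limiter: g(γ) = 0 on L = (−∞, −βη], g(γ) = γ/η + β on S = (−βη, η−βη), g(γ) = 1 on U = [η−βη, ∞), with η > 0, 0 < β < 1. If η and β satisfy the consistency equations η = (C₀^U C₁^S + C₁^U − C₀^S C₁^U)/(C₀^U C₀^L + (1 − C₀^S)σ_v²/A²) and β = (C₀^U C₁^S + C₀^U C₁^U + C₁^S σ_v²/A²)/(C₀^U C₁^S + C₁^U − C₀^S C₁^U), then the SNDR of g equals 1/(1/R − 1) where R = C₂^S + η C₁^U + η β C₁^S. -/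

import Mathlib

open MeasureTheory Real

lemma ind_comp_integrable {Ω : Type*} [MeasurableSpace Ω] (μ : Measure Ω)
    [IsProbabilityMeasure μ] (γ : Ω → ℝ) (hγ : Measurable γ)
    (S : Set ℝ) (hS : MeasurableSet S) (f : ℝ → ℝ) (hf : Measurable f)
    (c : ℝ) (hc0 : 0 ≤ c) (hc : ∀ t ∈ S, |f t| ≤ c) :
    Integrable (fun ω => S.indicator f (γ ω)) μ := by
  apply Integrable.mono' (integrable_const c)
  · exact ((hf.indicator hS).comp hγ).aestronglyMeasurable
  · filter_upwards with ω
    by_cases h : γ ω ∈ S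
    · simpa [Set.indicator_of_mem h] using hc _ h
    · simpa [Set.indicator_of_notMem h] using hc0

lemma ind_comp_integrable_id {Ω : Type*} [MeasurableSpace Ω] (μ : Measure Ω)
    (γ : Ω → ℝ) (hγ : Measurable γ) (hγ1 : Integrable γ μ)
    (S : Set ℝ) (hS : MeasurableSet S) :
    Integrable (fun ω => S.indicator (fun t => t) (γ ω)) μ := by
  apply Integrable.mono hγ1
  · exact ((measurable_id.indicator hS).comp hγ).aestronglyMeasurable
  · filter_upwards with ω
    by_cases h : γ ω ∈ S
    · simp [Set.indicator_of_mem h]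
    · simp [Set.indicator_of_notMem h]

set_option maxHeartbeats 1000000 in
theorem stmt_19 {Ω : Type*} [MeasurableSpace Ω] (μ : Measure Ω) [IsProbabilityMeasure μ]
    (γ : Ω → ℝ) (g : ℝ → ℝ) (η β A σv2 : ℝ)
    (hγ : Measurable γ)
    (hγ1 : Integrable γ μ)
    (hγ2 : Integrable (fun ω => (γ ω) ^ 2) μ)
    (hmean : ∫ ω, γ ω ∂μ = 0)
    (hvar : ∫ ω, (γ ω) ^ 2 ∂μ = 1)
    (hη : 0 < η) (hβ : 0 < β) (hβ1 : β < 1)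
    (hA : 0 < A) (hσv2 : 0 < σv2)
    (hgdef : ∀ t : ℝ, g t =
      if t ≤ -β * η then 0 else if t < η - β * η then t / η + β else 1)
    (C0L C0S C0U C1S C1U C2S : ℝ)
    (hC0L : C0L = ∫ ω, Set.indicator (Set.Iic (-β * η)) (fun _ => (1 : ℝ)) (γ ω) ∂μ)
    (hC0S : C0S = ∫ ω, Set.indicator (Set.Ioo (-β * η) (η - β * η)) (fun _ => (1 : ℝ)) (γ ω) ∂μ)
    (hC0U : C0U = ∫ ω, Set.indicator (Set.Ici (η - β * η)) (fun _ => (1 : ℝ)) (γ ω) ∂μ)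
    (hC1S : C1S = ∫ ω, Set.indicator (Set.Ioo (-β * η) (η - β * η)) (fun t => t) (γ ω) ∂μ)
    (hC1U : C1U = ∫ ω, Set.indicator (Set.Ici (η - β * η)) (fun t => t) (γ ω) ∂μ)
    (hC2S : C2S = ∫ ω, Set.indicator (Set.Ioo (-β * η) (η - β * η)) (fun t => t ^ 2) (γ ω) ∂μ)
    (hηeq : η = (C0U * C1S + C1U - C0S * C1U) /
        (C0U * C0L + (1 - C0S) * (σv2 / A ^ 2)))
    (hβeq : β = (C0U * C1S + C0U * C1U + C1S * (σv2 / A ^ 2)) /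
        (C0U * C1S + C1U - C0S * C1U))
    (R SNDR : ℝ)
    (hR : R = C2S + η * C1U + η * β * C1S)
    (hSNDR : SNDR = (∫ ω, γ ω * g (γ ω) ∂μ) ^ 2 /
        (((∫ ω, (g (γ ω)) ^ 2 ∂μ) - (∫ ω, g (γ ω) ∂μ) ^ 2)
          - (∫ ω, γ ω * g (γ ω) ∂μ) ^ 2 + σv2 / A ^ 2)) :
    SNDR = 1 / (1 / R - 1) := by
  have hηne : η ≠ 0 := ne_of_gt hη
  set a : ℝ := -β * η with ha
  set b : ℝ := η - β * η with hb
  have hab : a < b := by rw [ha, hb]; nlinarith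
  set s : ℝ := σv2 / A ^ 2 with hs
  have hspos : 0 < s := div_pos hσv2 (pow_pos hA 2)
  -- basic indicator integrands
  set f0L : Ω → ℝ := fun ω => (Set.Iic a).indicator (fun _ => (1:ℝ)) (γ ω) with hf0L
  set f0S : Ω → ℝ := fun ω => (Set.Ioo a b).indicator (fun _ => (1:ℝ)) (γ ω) with hf0S
  set f0U : Ω → ℝ := fun ω => (Set.Ici b).indicator (fun _ => (1:ℝ)) (γ ω) with hf0U
  set f1S : Ω → ℝ := fun ω => (Set.Ioo a b).indicator (fun t => t) (γ ω) with hf1S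
  set f1U : Ω → ℝ := fun ω => (Set.Ici b).indicator (fun t => t) (γ ω) with hf1U
  set f2S : Ω → ℝ := fun ω => (Set.Ioo a b).indicator (fun t => t^2) (γ ω) with hf2S
  -- integrabilities
  have i0L : Integrable f0L μ :=
    ind_comp_integrable μ γ hγ _ measurableSet_Iic _ measurable_const 1 zero_le_one
      (fun t _ => by norm_num)
  have i0S : Integrable f0S μ :=
    ind_comp_integrable μ γ hγ _ measurableSet_Ioo _ measurable_const 1 zero_le_one
      (fun t _ => by norm_num)
  have i0U : Integrable f0U μ :=
    ind_comp_integrable μ γ hγ _ measurableSet_Ici _ measurable_const 1 zero_le_one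
      (fun t _ => by norm_num)
  have i1S : Integrable f1S μ :=
    ind_comp_integrable μ γ hγ _ measurableSet_Ioo _ measurable_id (max |a| |b|)
      (le_max_iff.2 (Or.inl (abs_nonneg a)))
      (fun t ht => by
        rcases ht with ⟨h1, h2⟩
        rcases le_or_gt 0 t with h | h
        · exact le_max_of_le_right (by rw [abs_of_nonneg h]; exact le_trans h2.le (le_abs_self b))
        · refine le_max_of_le_left ?_
          rw [abs_of_neg h]
          calc -t ≤ -a := by linarith
          _ ≤ |a| := neg_le_abs a)
  have i1U : Integrable f1U μ := ind_comp_integrable_id μ γ hγ hγ1 _ measurableSet_Ici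
  have i2S : Integrable f2S μ :=
    ind_comp_integrable μ γ hγ _ measurableSet_Ioo _ (measurable_id.pow_const 2)
      (max a b ^ 2 + a^2) (by positivity)
      (fun t ht => by
        rcases ht with ⟨h1, h2⟩
        rw [abs_of_nonneg (sq_nonneg t)]
        rcases le_or_gt 0 t with h | h
        · nlinarith [le_max_right a b, sq_nonneg a]
        · nlinarith [sq_nonneg (max a b)])
  have memcase : ∀ t : ℝ, (t ≤ a ∧ t ∉ Set.Ioo a b ∧ t ∉ Set.Ici b) ∨
      (¬ t ≤ a ∧ t < b ∧ t ∈ Set.Ioo a b ∧ t ∉ Set.Ici b) ∨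
      (¬ t ≤ a ∧ ¬ t < b ∧ t ∉ Set.Ioo a b ∧ t ∈ Set.Ici b) := by
    intro t
    rcases le_or_gt t a with h | h
    · exact Or.inl ⟨h, by simp [Set.mem_Ioo]; intro h'; linarith, by simp [Set.mem_Ici]; linarith⟩
    · rcases lt_or_ge t b with h' | h'
      · exact Or.inr (Or.inl ⟨not_le.2 h, h', Set.mem_Ioo.2 ⟨h, h'⟩, by simp [Set.mem_Ici]; linarith⟩)
      · exact Or.inr (Or.inr ⟨not_le.2 h, not_lt.2 h', by simp [Set.mem_Ioo]; intro; linarith,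
          Set.mem_Ici.2 h'⟩)
  -- pointwise decompositions
  have hgpt : ∀ ω, g (γ ω) = η⁻¹ * f1S ω + β * f0S ω + f0U ω := by
    intro ω
    rcases memcase (γ ω) with ⟨h1, h2, h3⟩ | ⟨h1, h1', h2, h3⟩ | ⟨h1, h1', h2, h3⟩
    · rw [hgdef, if_pos h1, show f1S ω = 0 from Set.indicator_of_notMem h2 _,
        show f0S ω = 0 from Set.indicator_of_notMem h2 _,
        show f0U ω = 0 from Set.indicator_of_notMem h3 _]
      ring
    · rw [hgdef, if_neg h1, if_pos h1', show f1S ω = γ ω from Set.indicator_of_mem h2 _,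
        show f0S ω = 1 from Set.indicator_of_mem h2 _,
        show f0U ω = 0 from Set.indicator_of_notMem h3 _, div_eq_mul_inv]
      ring
    · rw [hgdef, if_neg h1, if_neg h1', show f1S ω = 0 from Set.indicator_of_notMem h2 _,
        show f0S ω = 0 from Set.indicator_of_notMem h2 _,
        show f0U ω = 1 from Set.indicator_of_mem h3 _]
      ring
  have hg2pt : ∀ ω, (g (γ ω))^2 =
      η⁻¹ * η⁻¹ * f2S ω + 2 * β * η⁻¹ * f1S ω + β^2 * f0S ω + f0U ω := by
    intro ω
    rcases memcase (γ ω) with ⟨h1, h2, h3⟩ | ⟨h1, h1', h2, h3⟩ | ⟨h1, h1', h2, h3⟩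
    · rw [hgdef, if_pos h1, show f2S ω = 0 from Set.indicator_of_notMem h2 _,
        show f1S ω = 0 from Set.indicator_of_notMem h2 _,
        show f0S ω = 0 from Set.indicator_of_notMem h2 _,
        show f0U ω = 0 from Set.indicator_of_notMem h3 _]
      ring
    · rw [hgdef, if_neg h1, if_pos h1', show f2S ω = (γ ω)^2 from Set.indicator_of_mem h2 _,
        show f1S ω = γ ω from Set.indicator_of_mem h2 _,
        show f0S ω = 1 from Set.indicator_of_mem h2 _,
        show f0U ω = 0 from Set.indicator_of_notMem h3 _, div_eq_mul_inv]
      ring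
    · rw [hgdef, if_neg h1, if_neg h1', show f2S ω = 0 from Set.indicator_of_notMem h2 _,
        show f1S ω = 0 from Set.indicator_of_notMem h2 _,
        show f0S ω = 0 from Set.indicator_of_notMem h2 _,
        show f0U ω = 1 from Set.indicator_of_mem h3 _]
      ring
  have hγgpt : ∀ ω, γ ω * g (γ ω) = η⁻¹ * f2S ω + β * f1S ω + f1U ω := by
    intro ω
    rcases memcase (γ ω) with ⟨h1, h2, h3⟩ | ⟨h1, h1', h2, h3⟩ | ⟨h1, h1', h2, h3⟩
    · rw [hgdef, if_pos h1, show f2S ω = 0 from Set.indicator_of_notMem h2 _,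
        show f1S ω = 0 from Set.indicator_of_notMem h2 _,
        show f1U ω = 0 from Set.indicator_of_notMem h3 _]
      ring
    · rw [hgdef, if_neg h1, if_pos h1', show f2S ω = (γ ω)^2 from Set.indicator_of_mem h2 _,
        show f1S ω = γ ω from Set.indicator_of_mem h2 _,
        show f1U ω = 0 from Set.indicator_of_notMem h3 _, div_eq_mul_inv]
      ring
    · rw [hgdef, if_neg h1, if_neg h1', show f2S ω = 0 from Set.indicator_of_notMem h2 _,
        show f1S ω = 0 from Set.indicator_of_notMem h2 _,
        show f1U ω = γ ω from Set.indicator_of_mem h3 _]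
      ring
  have honept : ∀ ω, (1:ℝ) = f0L ω + f0S ω + f0U ω := by
    intro ω
    rcases memcase (γ ω) with ⟨h1, h2, h3⟩ | ⟨h1, h1', h2, h3⟩ | ⟨h1, h1', h2, h3⟩
    · rw [show f0L ω = 1 from Set.indicator_of_mem (Set.mem_Iic.2 h1) _,
        show f0S ω = 0 from Set.indicator_of_notMem h2 _,
        show f0U ω = 0 from Set.indicator_of_notMem h3 _]
      ring
    · rw [show f0L ω = 0 from Set.indicator_of_notMem (by simpa [Set.mem_Iic] using h1) _,
        show f0S ω = 1 from Set.indicator_of_mem h2 _,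
        show f0U ω = 0 from Set.indicator_of_notMem h3 _]
      ring
    · rw [show f0L ω = 0 from Set.indicator_of_notMem (by simpa [Set.mem_Iic] using h1) _,
        show f0S ω = 0 from Set.indicator_of_notMem h2 _,
        show f0U ω = 1 from Set.indicator_of_mem h3 _]
      ring
  -- integral identities
  have hEg : ∫ ω, g (γ ω) ∂μ = η⁻¹ * C1S + β * C0S + C0U := by
    calc ∫ ω, g (γ ω) ∂μ = ∫ ω, (η⁻¹ * f1S ω + β * f0S ω) + f0U ω ∂μ :=
          integral_congr_ae (.of_forall fun ω => hgpt ω)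
    _ = (∫ ω, (η⁻¹ * f1S ω + β * f0S ω) ∂μ) + ∫ ω, f0U ω ∂μ :=
          integral_add ((i1S.const_mul _).add (i0S.const_mul _)) i0U
    _ = (∫ ω, η⁻¹ * f1S ω ∂μ) + (∫ ω, β * f0S ω ∂μ) + ∫ ω, f0U ω ∂μ :=
          congrArg (fun x => x + ∫ ω, f0U ω ∂μ) (integral_add (i1S.const_mul _) (i0S.const_mul _))
    _ = η⁻¹ * C1S + β * C0S + C0U := by
          rw [integral_const_mul, integral_const_mul, hC1S, hC0S, hC0U]
  have hEg2 : ∫ ω, (g (γ ω))^2 ∂μ =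
      η⁻¹ * η⁻¹ * C2S + 2 * β * η⁻¹ * C1S + β^2 * C0S + C0U := by
    calc ∫ ω, (g (γ ω))^2 ∂μ
        = ∫ ω, ((η⁻¹ * η⁻¹ * f2S ω + 2*β*η⁻¹ * f1S ω) + β^2 * f0S ω) + f0U ω ∂μ :=
          integral_congr_ae (.of_forall fun ω => hg2pt ω)
    _ = (∫ ω, ((η⁻¹ * η⁻¹ * f2S ω + 2*β*η⁻¹ * f1S ω) + β^2 * f0S ω) ∂μ) + ∫ ω, f0U ω ∂μ :=
          integral_add (((i2S.const_mul _).add (i1S.const_mul _)).add (i0S.const_mul _)) i0U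
    _ = (∫ ω, (η⁻¹ * η⁻¹ * f2S ω + 2*β*η⁻¹ * f1S ω) ∂μ) + (∫ ω, β^2 * f0S ω ∂μ)
          + ∫ ω, f0U ω ∂μ :=
          congrArg (fun x => x + ∫ ω, f0U ω ∂μ)
            (integral_add ((i2S.const_mul _).add (i1S.const_mul _)) (i0S.const_mul _))
    _ = (∫ ω, η⁻¹ * η⁻¹ * f2S ω ∂μ) + (∫ ω, 2*β*η⁻¹ * f1S ω ∂μ) + (∫ ω, β^2 * f0S ω ∂μ)
          + ∫ ω, f0U ω ∂μ :=
          congrArg (fun x => x + (∫ ω, β^2 * f0S ω ∂μ) + ∫ ω, f0U ω ∂μ)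
            (integral_add (i2S.const_mul _) (i1S.const_mul _))
    _ = η⁻¹ * η⁻¹ * C2S + 2 * β * η⁻¹ * C1S + β^2 * C0S + C0U := by
          rw [integral_const_mul, integral_const_mul, integral_const_mul, hC2S, hC1S, hC0S, hC0U]
  have hEγg : ∫ ω, γ ω * g (γ ω) ∂μ = η⁻¹ * C2S + β * C1S + C1U := by
    calc ∫ ω, γ ω * g (γ ω) ∂μ = ∫ ω, (η⁻¹ * f2S ω + β * f1S ω) + f1U ω ∂μ :=
          integral_congr_ae (.of_forall fun ω => hγgpt ω)
    _ = (∫ ω, (η⁻¹ * f2S ω + β * f1S ω) ∂μ) + ∫ ω, f1U ω ∂μ :=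
          integral_add ((i2S.const_mul _).add (i1S.const_mul _)) i1U
    _ = (∫ ω, η⁻¹ * f2S ω ∂μ) + (∫ ω, β * f1S ω ∂μ) + ∫ ω, f1U ω ∂μ :=
          congrArg (fun x => x + ∫ ω, f1U ω ∂μ) (integral_add (i2S.const_mul _) (i1S.const_mul _))
    _ = η⁻¹ * C2S + β * C1S + C1U := by
          rw [integral_const_mul, integral_const_mul, hC2S, hC1S, hC1U]
  have hsum : C0L + C0S + C0U = 1 := by
    have h1 : ∫ ω, (1:ℝ) ∂μ = ∫ ω, (f0L ω + f0S ω) + f0U ω ∂μ :=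
      integral_congr_ae (.of_forall fun ω => (honept ω))
    have h2 : ∫ ω, (f0L ω + f0S ω) + f0U ω ∂μ
        = (∫ ω, (f0L ω + f0S ω) ∂μ) + ∫ ω, f0U ω ∂μ := integral_add (i0L.add i0S) i0U
    have h3 : ∫ ω, (f0L ω + f0S ω) ∂μ = (∫ ω, f0L ω ∂μ) + ∫ ω, f0S ω ∂μ :=
      integral_add i0L i0S
    rw [integral_const, probReal_univ, one_smul, h2, h3] at h1
    rw [hC0L, hC0S, hC0U]
    linarith
  -- consequences of the consistency equations
  have hN1ne : C0U * C1S + C1U - C0S * C1U ≠ 0 := by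
    intro h
    rw [h, div_zero] at hβeq
    linarith
  have hD1ne : C0U * C0L + (1 - C0S) * s ≠ 0 := by
    intro h
    rw [h, div_zero] at hηeq
    linarith
  have h1 : η * (C0U * C0L + (1 - C0S) * s) = C0U * C1S + C1U - C0S * C1U := by
    rw [hηeq, div_mul_cancel₀ _ hD1ne]
  have h2 : β * (C0U * C1S + C1U - C0S * C1U)
      = C0U * C1S + C0U * C1U + C1S * s := by
    rw [hβeq, div_mul_cancel₀ _ hN1ne]
  have hC0Lv : C0L = 1 - C0S - C0U := by linarith
  rw [hC0Lv] at h1 hD1ne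
  have hpoly : ((C0U * (1 - C0S - C0U) + (1 - C0S) * s)^2 * (C0U * C1S + C1U - C0S * C1U)^2)
      * (β*η*C1S + β^2*η^2*C0S + C0U*η^2 + s*η^2 - (C1S + β*η*C0S + η*C0U)^2 - η*C1U) = 0 := by
    linear_combination (C1S^2*C1U*s^2 + (2:ℝ)*C0U*C1S^2*C1U*s + C0U*C1S^3*s^2 + C0U^2*C1S^2*C1U - (2:ℝ)*C0U^2*C1S^2*C1U*s + (2:ℝ)*C0U^2*C1S^3*s - (2:ℝ)*C0U^3*C1S^2*C1U + C0U^3*C1S^3 - (2:ℝ)*C0U^3*C1S^3*s + C0U^4*C1S^2*C1U - (2:ℝ)*C0U^4*C1S^3 + C0U^5*C1S^3 - (3:ℝ)*C0S*C1S^2*C1U*s^2 - (6:ℝ)*C0S*C0U*C1S^2*C1U*s - (2:ℝ)*C0S*C0U*C1S^3*s^2 - (3:ℝ)*C0S*C0U^2*C1S^2*C1U + (4:ℝ)*C0S*C0U^2*C1S^2*C1U*s - (4:ℝ)*C0S*C0U^2*C1S^3*s + (4:ℝ)*C0S*C0U^3*C1S^2*C1U - (2:ℝ)*C0S*C0U^3*C1S^3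 + (2:ℝ)*C0S*C0U^3*C1S^3*s - (1:ℝ)*C0S*C0U^4*C1S^2*C1U + (2:ℝ)*C0S*C0U^4*C1S^3 + (3:ℝ)*C0S^2*C1S^2*C1U*s^2 + (6:ℝ)*C0S^2*C0U*C1S^2*C1U*s + C0S^2*C0U*C1S^3*s^2 + (3:ℝ)*C0S^2*C0U^2*C1S^2*C1U - (2:ℝ)*C0S^2*C0U^2*C1S^2*C1U*s + (2:ℝ)*C0S^2*C0U^2*C1S^3*s - (2:ℝ)*C0S^2*C0U^3*C1S^2*C1U + C0S^2*C0U^3*C1S^3 - (1:ℝ)*C0S^3*C1S^2*C1U*s^2 - (2:ℝ)*C0S^3*C0U*C1S^2*C1U*s - (1:ℝ)*C0S^3*C0U^2*C1S^2*C1U + η*C1U^2*s^2 + (2:ℝ)*η*C0U*C1U^2*s + (2:ℝ)*η*C0U*C1S*C1U*s^2 + η*C0U^2*C1U^2 - (2:ℝ)*η*C0U^2*C1U^2*s + (4:ℝ)*η*C0U^2*C1S*C1U*s + η*C0U^2*C1S^2*s^2 - (2:ℝ)*η*C0U^3*C1U^2 + (2:ℝ)*η*C0U^3*C1S*C1U -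 (4:ℝ)*η*C0U^3*C1S*C1U*s + (2:ℝ)*η*C0U^3*C1S^2*s + η*C0U^4*C1U^2 - (4:ℝ)*η*C0U^4*C1S*C1U + η*C0U^4*C1S^2 - (2:ℝ)*η*C0U^4*C1S^2*s + (2:ℝ)*η*C0U^5*C1S*C1U - (2:ℝ)*η*C0U^5*C1S^2 + η*C0U^6*C1S^2 - (3:ℝ)*η*C0S*C1U^2*s^2 + η*C0S*C1S^2*s^3 - (6:ℝ)*η*C0S*C0U*C1U^2*s - (4:ℝ)*η*C0S*C0U*C1S*C1U*s^2 + (3:ℝ)*η*C0S*C0U*C1S^2*s^2 - (3:ℝ)*η*C0S*C0U^2*C1U^2 + (4:ℝ)*η*C0S*C0U^2*C1U^2*s - (8:ℝ)*η*C0S*C0U^2*C1S*C1U*s + (3:ℝ)*η*C0S*C0U^2*C1S^2*s - (4:ℝ)*η*C0S*C0U^2*C1S^2*s^2 + (4:ℝ)*η*C0S*C0U^3*C1U^2 - (4:ℝ)*η*C0S*C0U^3*C1S*C1U + (4:ℝ)*η*C0S*C0U^3*C1S*C1U*s + η*C0S*C0U^3*C1S^2 - (8:ℝ)*η*C0S*C0U^3*C1S^2*s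 - (1:ℝ)*η*C0S*C0U^4*C1U^2 + (4:ℝ)*η*C0S*C0U^4*C1S*C1U - (4:ℝ)*η*C0S*C0U^4*C1S^2 + (3:ℝ)*η*C0S*C0U^4*C1S^2*s + (3:ℝ)*η*C0S*C0U^5*C1S^2 + (3:ℝ)*η*C0S^2*C1U^2*s^2 - (2:ℝ)*η*C0S^2*C1S^2*s^3 + (6:ℝ)*η*C0S^2*C0U*C1U^2*s + (2:ℝ)*η*C0S^2*C0U*C1S*C1U*s^2 - (6:ℝ)*η*C0S^2*C0U*C1S^2*s^2 + (3:ℝ)*η*C0S^2*C0U^2*C1U^2 - (2:ℝ)*η*C0S^2*C0U^2*C1U^2*s + (4:ℝ)*η*C0S^2*C0U^2*C1S*C1U*s - (6:ℝ)*η*C0S^2*C0U^2*C1S^2*s + (3:ℝ)*η*C0S^2*C0U^2*C1S^2*s^2 - (2:ℝ)*η*C0S^2*C0U^3*C1U^2 + (2:ℝ)*η*C0S^2*C0U^3*C1S*C1U - (2:ℝ)*η*C0S^2*C0U^3*C1S^2 + (6:ℝ)*η*C0S^2*C0U^3*C1S^2*s + (3:ℝ)*η*C0S^2*C0U^4*C1S^2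 - (1:ℝ)*η*C0S^3*C1U^2*s^2 + η*C0S^3*C1S^2*s^3 - (2:ℝ)*η*C0S^3*C0U*C1U^2*s + (3:ℝ)*η*C0S^3*C0U*C1S^2*s^2 - (1:ℝ)*η*C0S^3*C0U^2*C1U^2 + (3:ℝ)*η*C0S^3*C0U^2*C1S^2*s + η*C0S^3*C0U^3*C1S^2) * h1
      + ((C0U * (1 - C0S - C0U) + (1 - C0S) * s)^2 * (η*C1S*C1U + η*C0U*C1S^2 - (3:ℝ)*η*C0S*C1S*C1U - (2:ℝ)*η*C0S*C0U*C1S^2 + (2:ℝ)*η*C0S^2*C1S*C1U + η^2*C0S*C1S*s - (1:ℝ)*η^2*C0S*C0U*C1U + η^2*C0S*C0U*C1S - (2:ℝ)*η^2*C0S*C0U^2*C1S - (1:ℝ)*η^2*C0S^2*C1S*s + η^2*C0S^2*C0U*C1U - (1:ℝ)*η^2*C0S^2*C0U*C1S + η^2*β*C0S*C1U + η^2*β*C0S*C0U*C1S - (2:ℝ)*η^2*β*C0S^2*C1U - (1:ℝ)*η^2*β*C0S^2*C0U*C1S + η^2*β*C0S^3*C1U)) * h2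
  have hT : β*η*C1S + β^2*η^2*C0S + C0U*η^2 + s*η^2
      - (C1S + β*η*C0S + η*C0U)^2 - η*C1U = 0 := by
    rcases mul_eq_zero.mp hpoly with h | h
    · exact absurd h (mul_ne_zero (pow_ne_zero 2 hD1ne) (pow_ne_zero 2 hN1ne))
    · exact h
  -- integrability of g ∘ γ and its square
  have ig : Integrable (fun ω => g (γ ω)) μ :=
    (((i1S.const_mul _).add (i0S.const_mul _)).add i0U).congr
      (Filter.Eventually.of_forall fun ω => (hgpt ω).symm)
  have ig2 : Integrable (fun ω => (g (γ ω))^2) μ :=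
    ((((i2S.const_mul _).add (i1S.const_mul _)).add (i0S.const_mul _)).add i0U).congr
      (Filter.Eventually.of_forall fun ω => (hg2pt ω).symm)
  -- variance of g(γ) is nonnegative
  have hvarg : 0 ≤ (∫ ω, (g (γ ω))^2 ∂μ) - (∫ ω, g (γ ω) ∂μ)^2 := by
    set m := ∫ ω, g (γ ω) ∂μ with hm
    have h0 : 0 ≤ ∫ ω, (g (γ ω) - m)^2 ∂μ := integral_nonneg fun ω => sq_nonneg _
    have e0 : ∫ ω, (g (γ ω) - m)^2 ∂μ
        = ∫ ω, ((g (γ ω))^2 - (2*m) * g (γ ω)) + m^2 ∂μ :=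
      integral_congr_ae (.of_forall fun ω => by ring)
    have e1 : ∫ ω, ((g (γ ω))^2 - (2*m) * g (γ ω)) + m^2 ∂μ
        = (∫ ω, ((g (γ ω))^2 - (2*m) * g (γ ω)) ∂μ) + ∫ ω, (m^2 : ℝ) ∂μ :=
      integral_add (ig2.sub (ig.const_mul _)) (integrable_const _)
    have e2 : ∫ ω, ((g (γ ω))^2 - (2*m) * g (γ ω)) ∂μ
        = (∫ ω, (g (γ ω))^2 ∂μ) - ∫ ω, (2*m) * g (γ ω) ∂μ :=
      integral_sub ig2 (ig.const_mul _)
    have e3 : ∫ ω, (2*m) * g (γ ω) ∂μ = (2*m) * m := by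
      rw [integral_const_mul, ← hm]
    have e4 : ∫ ω, (m^2 : ℝ) ∂μ = m^2 := by
      rw [integral_const, probReal_univ, one_smul]
    rw [e0, e1, e2, e3, e4] at h0
    have e5 : (∫ ω, (g (γ ω))^2 ∂μ) - (2*m)*m + m^2 = (∫ ω, (g (γ ω))^2 ∂μ) - m^2 := by
      ring
    rw [e5] at h0
    exact h0
  -- scaled moment identities
  have hEg' : η * ∫ ω, g (γ ω) ∂μ = C1S + η*β*C0S + η*C0U := by
    rw [hEg]; field_simp
  have hEg2' : η^2 * ∫ ω, (g (γ ω))^2 ∂μ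
      = C2S + 2*β*η*C1S + η^2*β^2*C0S + η^2*C0U := by
    rw [hEg2]; field_simp
  have hEγgR : η * ∫ ω, γ ω * g (γ ω) ∂μ = R := by
    rw [hEγg, hR]; field_simp; ring
  have hKey : η^2 * ((∫ ω, (g (γ ω))^2 ∂μ) - (∫ ω, g (γ ω) ∂μ)^2 + s) = R := by
    linear_combination hT + hEg2'
      - (η * (∫ ω, g (γ ω) ∂μ) + (C1S + η*β*C0S + η*C0U)) * hEg' - hR
  have hDpos : 0 < (∫ ω, (g (γ ω))^2 ∂μ) - (∫ ω, g (γ ω) ∂μ)^2 + s := by linarith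
  have hRpos : 0 < R := by
    rw [← hKey]; exact mul_pos (by positivity) hDpos
  have hEγgv : ∫ ω, γ ω * g (γ ω) ∂μ = R / η := by
    rw [eq_div_iff hηne]; linarith [hEγgR]
  have hKeyv : (∫ ω, (g (γ ω))^2 ∂μ) - (∫ ω, g (γ ω) ∂μ)^2 + s = R / η^2 := by
    rw [eq_div_iff (pow_ne_zero 2 hηne)]; linarith [hKey]
  have hden : ((∫ ω, (g (γ ω))^2 ∂μ) - (∫ ω, g (γ ω) ∂μ)^2)
      - (∫ ω, γ ω * g (γ ω) ∂μ)^2 + s = R/η^2 - (R/η)^2 := by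
    rw [hEγgv]; linarith [hKeyv]
  rw [hSNDR, hden, hEγgv]
  by_cases hR1 : R = 1
  · rw [hR1]
    norm_num [div_pow]
  · have h1mR : (1:ℝ) - R ≠ 0 := sub_ne_zero.2 (Ne.symm hR1)
    have hbne : R/η^2 - (R/η)^2 ≠ 0 := by
      have e : R/η^2 - (R/η)^2 = R*(1-R)/η^2 := by field_simp
      rw [e]
      exact div_ne_zero (mul_ne_zero hRpos.ne' h1mR) (pow_ne_zero 2 hηne)
    have h1R : 1/R - 1 = (1-R)/R := by field_simp
    rw [h1R, one_div_div]
    rw [div_eq_div_iff hbne h1mR]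
    field_simp
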